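/- For a family of partitions as above, the class-(a) quadratic variation sums converge: with probability 1, Σ_{(a)} f(s_{i−1},ω)(W_{s_i} − W_{s_{i−1}})² − Σ_{(a)} f(s_{i−1},ω)(s_i − s_{i−1}) → 0 as n → ∞. -/

import Mathlib

open MeasureTheory ProbabilityTheory Filter Topology Real Set
open scoped NNReal ENNReal

lemma gauss_int_even (k : ℕ) (hk : Even k) {b : ℝ} (hb : 0 < b) :
    ∫ x : ℝ, x ^ k * Real.exp (-b * x ^ 2) =
      2 * (b ^ (-((k:ℝ) + 1) / 2) * (1 / 2) * Real.Gamma (((k:ℝ) + 1) / 2)) := by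
  have h1 : ∫ x : ℝ, x ^ k * Real.exp (-b * x ^ 2)
      = 2 * ∫ x in Ioi (0:ℝ), x ^ k * Real.exp (-b * x ^ 2) := by
    rw [← integral_comp_abs (f := fun x => x ^ k * Real.exp (-b * x ^ 2))]
    congr 1 with x
    rw [hk.pow_abs, sq_abs]
  rw [h1]
  congr 1
  rw [← integral_rpow_mul_exp_neg_mul_rpow (by norm_num : (0:ℝ) < 2)
    (lt_of_lt_of_le (by norm_num) (Nat.cast_nonneg k)) hb]
  refine setIntegral_congr_fun measurableSet_Ioi (fun x hx => ?_)
  rw [Real.rpow_natCast, Real.rpow_two]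

lemma gauss_integrable_pow_exp (k : ℕ) {b : ℝ} (hb : 0 < b) :
    Integrable (fun x : ℝ => x ^ k * Real.exp (-b * x ^ 2)) := by
  have := integrable_rpow_mul_exp_neg_mul_sq hb
    (lt_of_lt_of_le (by norm_num) (Nat.cast_nonneg k) : (-1:ℝ) < (k:ℝ))
  simpa [Real.rpow_natCast] using this

lemma gaussianPDFReal_zero_mean (v : ℝ≥0) (x : ℝ) :
    gaussianPDFReal 0 v x = (Real.sqrt (2 * π * v))⁻¹ * Real.exp (-(2 * (v:ℝ))⁻¹ * x ^ 2) := by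
  rw [gaussianPDFReal]
  congr 1
  rw [sub_zero]
  congr 1
  by_cases hv : (v:ℝ) = 0
  · simp [hv]
  · field_simp

lemma integral_gaussianReal_eq (v : ℝ≥0) (hv : v ≠ 0) (g : ℝ → ℝ) :
    ∫ x, g x ∂(gaussianReal 0 v) = ∫ x, gaussianPDFReal 0 v x * g x := by
  rw [gaussianReal_of_var_ne_zero 0 hv]
  have hmeas : Measurable fun x => (gaussianPDFReal 0 v x).toNNReal :=
    (measurable_gaussianPDFReal 0 v).real_toNNReal
  have : (gaussianPDF 0 v) = fun x => ((gaussianPDFReal 0 v x).toNNReal : ℝ≥0∞) := by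
    funext x; rfl
  rw [this, integral_withDensity_eq_integral_smul hmeas]
  congr 1 with x
  rw [NNReal.smul_def, smul_eq_mul, Real.coe_toNNReal _ (gaussianPDFReal_nonneg 0 v x)]

lemma integrable_pow_gaussianReal (v : ℝ≥0) (hv : v ≠ 0) (k : ℕ) :
    Integrable (fun x : ℝ => x ^ k) (gaussianReal 0 v) := by
  rw [gaussianReal_of_var_ne_zero 0 hv]
  have hmeas : Measurable fun x => (gaussianPDFReal 0 v x).toNNReal :=
    (measurable_gaussianPDFReal 0 v).real_toNNReal
  have : (gaussianPDF 0 v) = fun x => ((gaussianPDFReal 0 v x).toNNReal : ℝ≥0∞) := by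
    funext x; rfl
  rw [this, integrable_withDensity_iff_integrable_smul hmeas]
  have hb : (0:ℝ) < (2 * (v:ℝ))⁻¹ := by
    have : (0:ℝ) < (v:ℝ) := lt_of_le_of_ne (v.coe_nonneg) (by exact_mod_cast (Ne.symm hv))
    positivity
  have h := (gauss_integrable_pow_exp k hb).const_mul (Real.sqrt (2 * π * v))⁻¹
  refine h.congr ?_
  filter_upwards with x
  rw [NNReal.smul_def, smul_eq_mul, Real.coe_toNNReal _ (gaussianPDFReal_nonneg 0 v x),
    gaussianPDFReal_zero_mean]
  ring

lemma gauss_moment_aux (k : ℕ) (hk : Even k) (v : ℝ≥0) (hv : v ≠ 0) :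
    ∫ x, x ^ k ∂(gaussianReal 0 v) =
      (Real.sqrt (2 * π * v))⁻¹ *
        (2 * (((2 * (v:ℝ))⁻¹) ^ (-((k:ℝ) + 1) / 2) * (1 / 2) *
          Real.Gamma (((k:ℝ) + 1) / 2))) := by
  have hc : (0:ℝ) < (v:ℝ) := lt_of_le_of_ne v.coe_nonneg (by exact_mod_cast (Ne.symm hv))
  have hb : (0:ℝ) < (2 * (v:ℝ))⁻¹ := by positivity
  rw [integral_gaussianReal_eq v hv, ← gauss_int_even k hk hb, ← integral_const_mul]
  congr 1 with x
  rw [gaussianPDFReal_zero_mean]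
  ring

lemma gauss_moment_two (v : ℝ≥0) (hv : v ≠ 0) :
    ∫ x, x ^ 2 ∂(gaussianReal 0 v) = v := by
  have hc : (0:ℝ) < (v:ℝ) := lt_of_le_of_ne v.coe_nonneg (by exact_mod_cast (Ne.symm hv))
  have h2c : (0:ℝ) < 2 * (v:ℝ) := by linarith
  rw [gauss_moment_aux 2 ⟨1, rfl⟩ v hv]
  have hGam : Real.Gamma ((((2:ℕ):ℝ) + 1) / 2) = Real.sqrt π / 2 := by
    rw [show (((2:ℕ):ℝ) + 1) / 2 = 1/2 + 1 by norm_num, Real.Gamma_add_one (by norm_num),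
      Real.Gamma_one_half_eq]
    ring
  have hpow : ((2 * (v:ℝ))⁻¹) ^ (-(((2:ℕ):ℝ) + 1) / 2) = (2 * (v:ℝ)) * Real.sqrt (2 * (v:ℝ)) := by
    rw [Real.inv_rpow h2c.le, show (-(((2:ℕ):ℝ) + 1) / 2) = -(3/2) by norm_num,
      Real.rpow_neg h2c.le, inv_inv, show ((3:ℝ)/2) = 1 + 1/2 by norm_num,
      Real.rpow_add h2c, Real.rpow_one, ← Real.sqrt_eq_rpow]
  have hsq : Real.sqrt (2 * π * (v:ℝ)) = Real.sqrt (2 * (v:ℝ)) * Real.sqrt π := by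
    rw [show 2 * π * (v:ℝ) = (2 * (v:ℝ)) * π by ring, Real.sqrt_mul h2c.le]
  rw [hGam, hpow, hsq]
  have hs : Real.sqrt (2 * (v:ℝ)) > 0 := Real.sqrt_pos.mpr h2c
  have hπ : Real.sqrt π > 0 := Real.sqrt_pos.mpr Real.pi_pos
  field_simp

lemma gauss_moment_four (v : ℝ≥0) (hv : v ≠ 0) :
    ∫ x, x ^ 4 ∂(gaussianReal 0 v) = 3 * (v:ℝ) ^ 2 := by
  have hc : (0:ℝ) < (v:ℝ) := lt_of_le_of_ne v.coe_nonneg (by exact_mod_cast (Ne.symm hv))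
  have h2c : (0:ℝ) < 2 * (v:ℝ) := by linarith
  rw [gauss_moment_aux 4 ⟨2, rfl⟩ v hv]
  have hGam : Real.Gamma ((((4:ℕ):ℝ) + 1) / 2) = 3 * Real.sqrt π / 4 := by
    rw [show (((4:ℕ):ℝ) + 1) / 2 = 3/2 + 1 by norm_num, Real.Gamma_add_one (by norm_num),
      show ((3:ℝ)/2) = 1/2 + 1 by norm_num, Real.Gamma_add_one (by norm_num),
      Real.Gamma_one_half_eq]
    ring
  have hpow : ((2 * (v:ℝ))⁻¹) ^ (-(((4:ℕ):ℝ) + 1) / 2)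
      = (2 * (v:ℝ)) ^ 2 * Real.sqrt (2 * (v:ℝ)) := by
    rw [Real.inv_rpow h2c.le, show (-(((4:ℕ):ℝ) + 1) / 2) = -(5/2) by norm_num,
      Real.rpow_neg h2c.le, inv_inv, show ((5:ℝ)/2) = 2 + 1/2 by norm_num,
      Real.rpow_add h2c, Real.rpow_two, ← Real.sqrt_eq_rpow]
  have hsq : Real.sqrt (2 * π * (v:ℝ)) = Real.sqrt (2 * (v:ℝ)) * Real.sqrt π := by
    rw [show 2 * π * (v:ℝ) = (2 * (v:ℝ)) * π by ring, Real.sqrt_mul h2c.le]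
  rw [hGam, hpow, hsq]
  have hs : Real.sqrt (2 * (v:ℝ)) > 0 := Real.sqrt_pos.mpr h2c
  have hπ : Real.sqrt π > 0 := Real.sqrt_pos.mpr Real.pi_pos
  field_simp
  ring

section helpers
variable {Ω : Type*} [mΩ : MeasurableSpace Ω] {P : Measure Ω} [IsProbabilityMeasure P]

omit [IsProbabilityMeasure P] in
lemma integrable_mul_of_L2 {f g : Ω → ℝ} (hf : MemLp f 2 P) (hg : MemLp g 2 P) :
    Integrable (fun ω => f ω * g ω) P := by
  have hbound : Integrable (fun ω => (f ω ^ 2 + g ω ^ 2) / 2) P :=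
    (hf.integrable_sq.add hg.integrable_sq).div_const 2
  refine hbound.mono' (hf.aestronglyMeasurable.mul hg.aestronglyMeasurable) ?_
  filter_upwards with ω
  rw [Real.norm_eq_abs, abs_mul]
  nlinarith [sq_nonneg (|f ω| - |g ω|), sq_abs (f ω), sq_abs (g ω), abs_nonneg (f ω),
    abs_nonneg (g ω)]

/-- Moments of a random variable whose law is a centered Gaussian. -/
lemma gauss_rv_moments {D : Ω → ℝ} (hD : Measurable D) {Δ : ℝ} (hΔ : 0 < Δ)
    (hlaw : Measure.map D P = gaussianReal 0 Δ.toNNReal) :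
    (Integrable (fun ω => D ω ^ 2) P ∧ ∫ ω, D ω ^ 2 ∂P = Δ) ∧
    (Integrable (fun ω => D ω ^ 4) P ∧ ∫ ω, D ω ^ 4 ∂P = 3 * Δ ^ 2) := by
  have hv : Δ.toNNReal ≠ 0 := by
    simp [Real.toNNReal_eq_zero, not_le, hΔ]
  have hcoe : ((Δ.toNNReal : ℝ)) = Δ := Real.coe_toNNReal _ hΔ.le
  have key : ∀ k : ℕ, Integrable (fun ω => D ω ^ k) P ∧
      ∫ ω, D ω ^ k ∂P = ∫ x, x ^ k ∂(gaussianReal 0 Δ.toNNReal) := by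
    intro k
    have hφ : Measurable fun x : ℝ => x ^ k := measurable_id.pow_const k
    constructor
    · have := (integrable_map_measure hφ.aestronglyMeasurable hD.aemeasurable).mp
        (by rw [hlaw]; exact integrable_pow_gaussianReal _ hv k)
      exact this
    · rw [← integral_map hD.aemeasurable hφ.aestronglyMeasurable, hlaw]
  refine ⟨⟨(key 2).1, ?_⟩, ⟨(key 4).1, ?_⟩⟩
  · rw [(key 2).2, gauss_moment_two _ hv, hcoe]
  · rw [(key 4).2, gauss_moment_four _ hv, hcoe]

/-- The variance bound for a single partition. -/
lemma variance_bound (F : ℝ → MeasurableSpace Ω) (hF : ∀ t, F t ≤ mΩ)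
    (hFmono : ∀ s t : ℝ, s ≤ t → F s ≤ F t)
    {m : ℕ} (σ : Fin (m + 1) → ℝ) (hσ : StrictMono σ)
    (X D : Fin m → Ω → ℝ)
    (hXmeas : ∀ i, Measurable[F (σ i.castSucc)] (X i))
    (hXL2 : ∀ i, MemLp (X i) 2 P)
    {C : ℝ} (hXvar : ∀ i, ∫ ω, X i ω ^ 2 ∂P ≤ C)
    (hDmeas : ∀ i, Measurable[F (σ i.succ)] (D i))
    (hIndep : ∀ i, Indep (MeasurableSpace.comap (D i) (borel ℝ)) (F (σ i.castSucc)) P)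
    (hlaw : ∀ i, Measure.map (D i) P
      = gaussianReal 0 (Real.toNNReal (σ i.succ - σ i.castSucc)))
    (A : Finset (Fin m)) :
    Integrable (fun ω => (∑ i ∈ A,
        X i ω * (D i ω ^ 2 - (σ i.succ - σ i.castSucc))) ^ 2) P ∧
    ∫ ω, (∑ i ∈ A, X i ω * (D i ω ^ 2 - (σ i.succ - σ i.castSucc))) ^ 2 ∂P
      ≤ 2 * C * ∑ i ∈ A, (σ i.succ - σ i.castSucc) ^ 2 := by
  classical
  set Δ : Fin m → ℝ := fun i => σ i.succ - σ i.castSucc with hΔdef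
  have hΔpos : ∀ i, 0 < Δ i := fun i =>
    sub_pos.mpr (hσ (Fin.castSucc_lt_succ (i := i)))
  set g : Fin m → Ω → ℝ := fun i ω => D i ω ^ 2 - Δ i with hgdef
  -- ambient measurability
  have hDamb : ∀ i, Measurable (D i) := fun i => (hDmeas i).mono (hF _) le_rfl
  have hXamb : ∀ i, Measurable (X i) := fun i => (hXmeas i).mono (hF _) le_rfl
  have hgamb : ∀ i, Measurable (g i) := fun i =>
    ((hDamb i).pow_const 2).sub measurable_const
  -- moments of D
  have hmom := fun i => gauss_rv_moments (hDamb i) (hΔpos i) (hlaw i)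
  -- integral and square-integral of g
  have hg_int : ∀ i, Integrable (g i) P := fun i =>
    ((hmom i).1.1.sub (integrable_const _))
  have hg_zero : ∀ i, ∫ ω, g i ω ∂P = 0 := by
    intro i
    rw [hgdef]
    simp only
    rw [integral_sub (hmom i).1.1 (integrable_const _), (hmom i).1.2, integral_const]
    simp
  have hg2_int : ∀ i, Integrable (fun ω => g i ω ^ 2) P := by
    intro i
    have : Integrable (fun ω => D i ω ^ 4 - 2 * Δ i * D i ω ^ 2 + Δ i ^ 2) P :=
      (((hmom i).2.1.sub ((hmom i).1.1.const_mul (2 * Δ i))).add (integrable_const _))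
    refine this.congr ?_
    filter_upwards with ω
    rw [hgdef]
    ring
  have hg2_val : ∀ i, ∫ ω, g i ω ^ 2 ∂P = 2 * Δ i ^ 2 := by
    intro i
    have heq : ∀ ω, g i ω ^ 2 = D i ω ^ 4 - 2 * Δ i * D i ω ^ 2 + Δ i ^ 2 := by
      intro ω; rw [hgdef]; ring
    have hsub : Integrable (fun ω => D i ω ^ 4 - 2 * Δ i * D i ω ^ 2) P := by
      exact (hmom i).2.1.sub ((hmom i).1.1.const_mul (2 * Δ i))
    have hcm : Integrable (fun ω => 2 * Δ i * D i ω ^ 2) P := (hmom i).1.1.const_mul (2 * Δ i)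
    rw [integral_congr_ae (Filter.Eventually.of_forall heq), integral_add hsub
      (integrable_const _), integral_sub (hmom i).2.1 hcm,
      integral_const_mul, (hmom i).1.2, (hmom i).2.2, integral_const]
    simp only [measure_univ, probReal_univ, ENNReal.toReal_one, smul_eq_mul, one_mul]
    ring
  -- independence helper
  have hDY : ∀ i (Y : Ω → ℝ), Measurable[F (σ i.castSucc)] Y → IndepFun (D i) Y P := by
    intro i Y hY
    have h := indep_of_indep_of_le_right (hIndep i) hY.comap_le
    exact h
  -- measurability w.r.t. F (σ j.castSucc) of things with index < j
  -- diagonal term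
  have hXg_indep : ∀ i, IndepFun (fun ω => g i ω ^ 2) (fun ω => X i ω ^ 2) P := by
    intro i
    have h := hDY i (fun ω => X i ω ^ 2) ((hXmeas i).pow_const 2)
    exact h.comp (((measurable_id.pow_const 2).sub measurable_const).pow_const 2) measurable_id
  have hX2_int : ∀ i, Integrable (fun ω => X i ω ^ 2) P := fun i => (hXL2 i).integrable_sq
  have hdiag_int : ∀ i, Integrable (fun ω => g i ω ^ 2 * X i ω ^ 2) P := fun i =>
    (hXg_indep i).integrable_mul (hg2_int i) (hX2_int i)
  have hdiag_val : ∀ i, ∫ ω, g i ω ^ 2 * X i ω ^ 2 ∂P ≤ C * (2 * Δ i ^ 2) := by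
    intro i
    have hval : ∫ ω, g i ω ^ 2 * X i ω ^ 2 ∂P
        = (∫ ω, g i ω ^ 2 ∂P) * ∫ ω, X i ω ^ 2 ∂P := by
      exact (hXg_indep i).integral_fun_mul_eq_mul_integral (hg2_int i).aestronglyMeasurable (hX2_int i).aestronglyMeasurable
    rw [hval, hg2_val]
    have h1 : ∫ ω, X i ω ^ 2 ∂P ≤ C := hXvar i
    have h2 : (0:ℝ) ≤ 2 * Δ i ^ 2 := by positivity
    calc 2 * Δ i ^ 2 * ∫ ω, X i ω ^ 2 ∂P ≤ 2 * Δ i ^ 2 * C :=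
          mul_le_mul_of_nonneg_left h1 h2
      _ = C * (2 * Δ i ^ 2) := by ring
  -- Memℒp of X i * g i
  have hXg_L2 : ∀ i, MemLp (fun ω => X i ω * g i ω) 2 P := by
    intro i
    refine (memLp_two_iff_integrable_sq
      ((hXamb i).mul (hgamb i)).aestronglyMeasurable).mpr ?_
    refine (hdiag_int i).congr ?_
    filter_upwards with ω
    rw [Pi.mul_apply]; ring
  -- off-diagonal terms vanish
  have hoff : ∀ i j : Fin m, i < j →
      (Integrable (fun ω => (X i ω * g i ω) * (X j ω * g j ω)) P ∧
       ∫ ω, (X i ω * g i ω) * (X j ω * g j ω) ∂P = 0) := by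
    intro i j hij
    have hle : σ i.castSucc ≤ σ j.castSucc := hσ.monotone (by
      simp only [Fin.le_def, Fin.coe_castSucc]; exact le_of_lt hij)
    have hle2 : σ i.succ ≤ σ j.castSucc := hσ.monotone (by
      simp only [Fin.le_def, Fin.val_succ, Fin.coe_castSucc]; exact hij)
    have hYmeas : Measurable[F (σ j.castSucc)] (fun ω => X i ω * g i ω * X j ω) := by
      have h1 : Measurable[F (σ j.castSucc)] (X i) :=
        (hXmeas i).mono (hFmono _ _ hle) le_rfl
      have h2 : Measurable[F (σ j.castSucc)] (D i) :=
        (hDmeas i).mono (hFmono _ _ hle2) le_rfl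
      have h3 : Measurable[F (σ j.castSucc)] (g i) :=
        (h2.pow_const 2).sub measurable_const
      exact (h1.mul h3).mul (hXmeas j)
    have hYint : Integrable (fun ω => X i ω * g i ω * X j ω) P := by
      have := integrable_mul_of_L2 (hXg_L2 i) (hXL2 j)
      exact this
    have hind : IndepFun (g j) (fun ω => X i ω * g i ω * X j ω) P := by
      have h := hDY j _ hYmeas
      exact h.comp ((measurable_id.pow_const 2).sub measurable_const) measurable_id
    have hint : Integrable (fun ω => g j ω * (X i ω * g i ω * X j ω)) P :=
      hind.integrable_mul (hg_int j) hYint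
    constructor
    · refine hint.congr ?_
      filter_upwards with ω; ring
    · have hval : ∫ ω, g j ω * (X i ω * g i ω * X j ω) ∂P
          = (∫ ω, g j ω ∂P) * ∫ ω, X i ω * g i ω * X j ω ∂P := by
        exact hind.integral_fun_mul_eq_mul_integral (hg_int j).aestronglyMeasurable hYint.aestronglyMeasurable
      rw [hg_zero j, zero_mul] at hval
      calc ∫ ω, (X i ω * g i ω) * (X j ω * g j ω) ∂P
          = ∫ ω, g j ω * (X i ω * g i ω * X j ω) ∂P := by
            refine integral_congr_ae (Filter.Eventually.of_forall fun ω => ?_); ring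
        _ = 0 := hval
  -- all pairwise products are integrable
  have hpair_int : ∀ i j : Fin m,
      Integrable (fun ω => (X i ω * g i ω) * (X j ω * g j ω)) P := by
    intro i j
    rcases lt_trichotomy i j with h | h | h
    · exact (hoff i j h).1
    · subst h
      refine (hdiag_int i).congr ?_
      filter_upwards with ω; ring
    · refine ((hoff j i h).1).congr ?_
      filter_upwards with ω; ring
  have hpair_val : ∀ i j : Fin m, i ≠ j →
      ∫ ω, (X i ω * g i ω) * (X j ω * g j ω) ∂P = 0 := by
    intro i j hne
    rcases lt_or_gt_of_ne hne with h | h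
    · exact (hoff i j h).2
    · rw [← (hoff j i h).2]
      refine integral_congr_ae (Filter.Eventually.of_forall fun ω => ?_); ring
  -- expand the square
  have hexp : ∀ ω, (∑ i ∈ A, X i ω * g i ω) ^ 2
      = ∑ i ∈ A, ∑ j ∈ A, (X i ω * g i ω) * (X j ω * g j ω) := by
    intro ω
    rw [sq, Finset.sum_mul_sum]
  have hV2_int : Integrable (fun ω => (∑ i ∈ A, X i ω * g i ω) ^ 2) P := by
    have : Integrable (fun ω => ∑ i ∈ A, ∑ j ∈ A, (X i ω * g i ω) * (X j ω * g j ω)) P :=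
      integrable_finset_sum _ fun i _ => integrable_finset_sum _ fun j _ => hpair_int i j
    exact this.congr (Filter.Eventually.of_forall fun ω => (hexp ω).symm)
  refine ⟨hV2_int, ?_⟩
  have hval : ∫ ω, (∑ i ∈ A, X i ω * g i ω) ^ 2 ∂P
      = ∑ i ∈ A, ∫ ω, (X i ω * g i ω) * (X i ω * g i ω) ∂P := by
    rw [integral_congr_ae (Filter.Eventually.of_forall hexp),
      integral_finset_sum _ fun i _ => integrable_finset_sum _ fun j _ => hpair_int i j]
    refine Finset.sum_congr rfl fun i hi => ?_
    rw [integral_finset_sum _ fun j _ => hpair_int i j]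
    rw [Finset.sum_eq_single i (fun j hj hne => hpair_val i j (Ne.symm hne)) (fun h => absurd hi h)]
  rw [hval]
  have : ∀ i ∈ A, ∫ ω, (X i ω * g i ω) * (X i ω * g i ω) ∂P ≤ C * (2 * Δ i ^ 2) := by
    intro i _
    calc ∫ ω, (X i ω * g i ω) * (X i ω * g i ω) ∂P
        = ∫ ω, g i ω ^ 2 * X i ω ^ 2 ∂P := by
          refine integral_congr_ae (Filter.Eventually.of_forall fun ω => ?_); ring
      _ ≤ C * (2 * Δ i ^ 2) := hdiag_val i
  calc ∑ i ∈ A, ∫ ω, (X i ω * g i ω) * (X i ω * g i ω) ∂P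
      ≤ ∑ i ∈ A, C * (2 * Δ i ^ 2) := Finset.sum_le_sum this
    _ = 2 * C * ∑ i ∈ A, Δ i ^ 2 := by
        rw [Finset.mul_sum]
        exact Finset.sum_congr rfl fun i _ => by ring

end helpers
lemma telescope_fin {M : ℕ} (σ : Fin (M + 1) → ℝ) :
    ∑ i : Fin M, (σ i.succ - σ i.castSucc) = σ (Fin.last M) - σ 0 := by
  set h : ℕ → ℝ := fun k => σ ⟨min k M, Nat.lt_succ_of_le (min_le_right _ _)⟩ with hh
  have step : ∀ i : Fin M, σ i.succ - σ i.castSucc = h ((i : ℕ) + 1) - h i := by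
    intro i
    have h1 : h ((i : ℕ) + 1) = σ i.succ := by
      rw [hh]; beta_reduce; congr 1
      apply Fin.ext
      have hi := i.isLt
      simp only [Fin.val_succ, Fin.mk_val] <;> omega
    have h2 : h (i : ℕ) = σ i.castSucc := by
      rw [hh]; beta_reduce; congr 1
      apply Fin.ext
      have hi := i.isLt
      simp only [Fin.coe_castSucc, Fin.mk_val] <;> omega
    rw [h1, h2]
  calc ∑ i : Fin M, (σ i.succ - σ i.castSucc) = ∑ i : Fin M, (h ((i : ℕ) + 1) - h (i : ℕ)) :=
        Finset.sum_congr rfl fun i _ => step i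
    _ = ∑ k ∈ Finset.range M, (h (k + 1) - h k) :=
        Fin.sum_univ_eq_sum_range (fun k => h (k + 1) - h k) M
    _ = h M - h 0 := Finset.sum_range_sub h M
    _ = σ (Fin.last M) - σ 0 := by
        have e1 : h M = σ (Fin.last M) := by
          rw [hh]; beta_reduce
          exact congrArg σ (Fin.ext (by simp [Fin.last]))
        have e2 : h 0 = σ 0 := by
          rw [hh]; beta_reduce
          exact congrArg σ (Fin.ext (by simp))
        rw [e1, e2]


/-- Backward jump operator of a time scale. -/
noncomputable def tsRho (T : Set ℝ) (t : ℝ) : ℝ := sSup {s | s ∈ T ∧ s < t}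

/-- A Brownian motion indexed by a time scale `T`. -/
def IsTimeScaleBM (T : Set ℝ) {Ω : Type*} [mΩ : MeasurableSpace Ω] (P : Measure Ω)
    (F : ℝ → MeasurableSpace Ω) (W : ℝ → Ω → ℝ) : Prop :=
  (∀ t, F t ≤ mΩ) ∧
  (∀ s t : ℝ, s ≤ t → F s ≤ F t) ∧
  (∀ t ∈ T ∪ {0}, @Measurable Ω ℝ (F t) _ (W t)) ∧
  (∀ᵐ ω ∂P, W 0 ω = 0) ∧
  (∀ s ∈ T, ∀ t ∈ T, s < t →
    Indep (MeasurableSpace.comap (fun ω => W t ω - W s ω) (borel ℝ)) (F s) P ∧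
    Measure.map (fun ω => W t ω - W s ω) P = gaussianReal 0 (Real.toNNReal (t - s))) ∧
  (∀ᵐ ω ∂P, ContinuousOn (fun t => W t ω) T)

/-- Almost sure convergence of the class-(a) quadratic variation sums along the
family of partitions `π⁽ⁿ⁾`. -/
theorem quadratic_variation_sum_tendsto_zero
    {Ω : Type*} [MeasurableSpace Ω] (P : Measure Ω) [IsProbabilityMeasure P]
    (T : Set ℝ) (hne : T.Nonempty) (hcl : IsClosed T)
    (F : ℝ → MeasurableSpace Ω) (W : ℝ → Ω → ℝ)
    (hBM : IsTimeScaleBM T P F W)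
    (f : ℝ → Ω → ℝ)
    (hf_adapted : ∀ t ∈ T, @Measurable Ω ℝ (F t) _ (f t))
    (hf_L2 : ∀ t ∈ T, MemLp (f t) 2 P)
    (t1 t2 : ℝ) (h1 : t1 ∈ T) (h2 : t2 ∈ T) (h12 : t1 < t2)
    (C : ℝ) (hC : ∀ t ∈ Set.Icc t1 t2 ∩ T, ∫ ω, (f t ω) ^ 2 ∂P ≤ C)
    (m : ℕ → ℕ) (s : (n : ℕ) → Fin (m n + 1) → ℝ)
    (hs0 : ∀ n, s n 0 = t1) (hsn : ∀ n, s n (Fin.last (m n)) = t2)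
    (hmono : ∀ n, StrictMono (s n)) (hsT : ∀ n i, s n i ∈ T)
    (hfine : ∀ n, ∀ i : Fin (m n),
      tsRho T (s n i.succ) - s n i.castSucc < (2:ℝ)⁻¹ ^ n) :
    ∀ᵐ ω ∂P, Tendsto
      (fun n : ℕ =>
        ∑ i ∈ Finset.univ.filter (fun i : Fin (m n) => tsRho T (s n i.succ) = s n i.succ),
          f (s n i.castSucc) ω *
            ((W (s n i.succ) ω - W (s n i.castSucc) ω) ^ 2 - (s n i.succ - s n i.castSucc)))
      atTop (𝓝 0) := by
  classical
  obtain ⟨hF, hFmono, hWmeas, -, hInc, -⟩ := hBM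
  set V : ℕ → Ω → ℝ := fun n ω =>
    ∑ i ∈ Finset.univ.filter (fun i : Fin (m n) => tsRho T (s n i.succ) = s n i.succ),
      f (s n i.castSucc) ω *
        ((W (s n i.succ) ω - W (s n i.castSucc) ω) ^ 2 - (s n i.succ - s n i.castSucc))
    with hVdef
  have hC0 : 0 ≤ C := le_trans (integral_nonneg fun ω => sq_nonneg _)
    (hC t1 ⟨⟨le_refl t1, h12.le⟩, h1⟩)
  -- apply the variance bound for each n
  have key : ∀ n, Integrable (fun ω => V n ω ^ 2) P ∧
      ∫ ω, V n ω ^ 2 ∂P ≤ 2 * C * (t2 - t1) * (2:ℝ)⁻¹ ^ n := by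
    intro n
    set A : Finset (Fin (m n)) :=
      Finset.univ.filter (fun i : Fin (m n) => tsRho T (s n i.succ) = s n i.succ) with hA
    have hbd := variance_bound (P := P) F hF hFmono (s n) (hmono n)
      (fun i => f (s n i.castSucc))
      (fun i ω => W (s n i.succ) ω - W (s n i.castSucc) ω)
      (fun i => hf_adapted _ (hsT n i.castSucc))
      (fun i => hf_L2 _ (hsT n i.castSucc))
      (C := C)
      (fun i => hC _ ⟨⟨by rw [← hs0 n]; exact (hmono n).monotone (Fin.zero_le _),
        by rw [← hsn n]; exact (hmono n).monotone (Fin.le_last _)⟩, hsT n i.castSucc⟩)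
      (fun i => ((hWmeas _ (Or.inl (hsT n i.succ))).sub
        ((hWmeas _ (Or.inl (hsT n i.castSucc))).mono
          (hFmono _ _ (hmono n (Fin.castSucc_lt_succ (i := i))).le) le_rfl)))
      (fun i => (hInc _ (hsT n i.castSucc) _ (hsT n i.succ)
        (hmono n (Fin.castSucc_lt_succ (i := i)))).1)
      (fun i => (hInc _ (hsT n i.castSucc) _ (hsT n i.succ)
        (hmono n (Fin.castSucc_lt_succ (i := i)))).2)
      A
    refine ⟨hbd.1, le_trans hbd.2 ?_⟩
    -- bound the sum of squared increments
    have hΔnonneg : ∀ i : Fin (m n), 0 ≤ s n i.succ - s n i.castSucc :=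
      fun i => (sub_pos.mpr (hmono n (Fin.castSucc_lt_succ (i := i)))).le
    have hΔsmall : ∀ i ∈ A, s n i.succ - s n i.castSucc < (2:ℝ)⁻¹ ^ n := by
      intro i hi
      have hTs := (Finset.mem_filter.mp hi).2
      have := hfine n i
      rwa [hTs] at this
    have hsum : ∑ i ∈ A, (s n i.succ - s n i.castSucc) ^ 2
        ≤ (2:ℝ)⁻¹ ^ n * (t2 - t1) := by
      calc ∑ i ∈ A, (s n i.succ - s n i.castSucc) ^ 2
          ≤ ∑ i ∈ A, (2:ℝ)⁻¹ ^ n * (s n i.succ - s n i.castSucc) := by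
            refine Finset.sum_le_sum fun i hi => ?_
            rw [sq]
            exact mul_le_mul_of_nonneg_right (hΔsmall i hi).le (hΔnonneg i)
        _ = (2:ℝ)⁻¹ ^ n * ∑ i ∈ A, (s n i.succ - s n i.castSucc) := by
            rw [Finset.mul_sum]
        _ ≤ (2:ℝ)⁻¹ ^ n * (t2 - t1) := by
            refine mul_le_mul_of_nonneg_left ?_ (by positivity)
            calc ∑ i ∈ A, (s n i.succ - s n i.castSucc)
                ≤ ∑ i : Fin (m n), (s n i.succ - s n i.castSucc) :=
                  Finset.sum_le_sum_of_subset_of_nonneg (Finset.filter_subset _ _)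
                    (fun i _ _ => hΔnonneg i)
              _ = t2 - t1 := by rw [telescope_fin (s n), hsn n, hs0 n]
    calc 2 * C * ∑ i ∈ A, (s n i.succ - s n i.castSucc) ^ 2
        ≤ 2 * C * ((2:ℝ)⁻¹ ^ n * (t2 - t1)) :=
          mul_le_mul_of_nonneg_left hsum (by positivity)
      _ = 2 * C * (t2 - t1) * (2:ℝ)⁻¹ ^ n := by ring
  -- measurability of V n
  have hVmeas : ∀ n, Measurable (V n) := by
    intro n
    refine Finset.measurable_sum _ fun i _ => ?_
    have hfm : Measurable (f (s n i.castSucc)) :=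
      (hf_adapted _ (hsT n i.castSucc)).mono (hF _) le_rfl
    have hWm : ∀ j : Fin (m n + 1), Measurable (W (s n j)) :=
      fun j => (hWmeas _ (Or.inl (hsT n j))).mono (hF _) le_rfl
    exact hfm.mul ((((hWm i.succ).sub (hWm i.castSucc)).pow_const 2).sub measurable_const)
  -- summability of the second moments
  set K : ℝ := 2 * C * (t2 - t1) with hK
  have hK0 : 0 ≤ K := by
    rw [hK]
    exact mul_nonneg (mul_nonneg (by norm_num) hC0) (sub_nonneg.mpr h12.le)
  have htsum : ∑' n, ∫⁻ ω, ENNReal.ofReal (V n ω ^ 2) ∂P ≠ ⊤ := by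
    have hle : ∀ n, ∫⁻ ω, ENNReal.ofReal (V n ω ^ 2) ∂P
        ≤ ENNReal.ofReal K * (ENNReal.ofReal 2⁻¹) ^ n := by
      intro n
      rw [← ofReal_integral_eq_lintegral_ofReal (key n).1
        (Filter.Eventually.of_forall fun ω => sq_nonneg _)]
      calc ENNReal.ofReal (∫ ω, V n ω ^ 2 ∂P) ≤ ENNReal.ofReal (K * (2:ℝ)⁻¹ ^ n) :=
            ENNReal.ofReal_le_ofReal (key n).2
        _ = ENNReal.ofReal K * (ENNReal.ofReal 2⁻¹) ^ n := by
            rw [ENNReal.ofReal_mul hK0, ENNReal.ofReal_pow (by norm_num)]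
    refine ne_top_of_le_ne_top ?_ (ENNReal.tsum_le_tsum hle)
    rw [ENNReal.tsum_mul_left, ENNReal.tsum_geometric]
    refine ENNReal.mul_ne_top ENNReal.ofReal_ne_top (ENNReal.inv_ne_top.mpr ?_)
    rw [← pos_iff_ne_zero, tsub_pos_iff_lt]
    exact ENNReal.ofReal_lt_one.mpr (by norm_num)
  have hlint : ∫⁻ ω, ∑' n, ENNReal.ofReal (V n ω ^ 2) ∂P ≠ ⊤ := by
    rw [lintegral_tsum fun n => (((hVmeas n).pow_const 2).ennreal_ofReal).aemeasurable]
    exact htsum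
  have hae : ∀ᵐ ω ∂P, ∑' n, ENNReal.ofReal (V n ω ^ 2) < ⊤ :=
    ae_lt_top (Measurable.ennreal_tsum fun n => ((hVmeas n).pow_const 2).ennreal_ofReal) hlint
  filter_upwards [hae] with ω hω
  have h0 : Tendsto (fun n => ENNReal.ofReal (V n ω ^ 2)) atTop (𝓝 0) :=
    ENNReal.tendsto_atTop_zero_of_tsum_ne_top hω.ne
  have h1' : Tendsto (fun n => V n ω ^ 2) atTop (𝓝 0) := by
    have := (ENNReal.tendsto_toReal (by simp : (0:ℝ≥0∞) ≠ ⊤)).comp h0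
    simp only [ENNReal.toReal_zero] at this
    refine this.congr fun n => ?_
    exact ENNReal.toReal_ofReal (sq_nonneg _)
  have h2' : Tendsto (fun n => Real.sqrt (V n ω ^ 2)) atTop (𝓝 0) := by
    have := (Real.continuous_sqrt.tendsto 0).comp h1'
    rw [Real.sqrt_zero] at this; exact this
  refine squeeze_zero_norm (fun n => ?_) h2'
  rw [Real.norm_eq_abs, ← Real.sqrt_sq_eq_abs]
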